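/- Let k > 2 and suppose 2k = 2^s for some integer s (necessarily s > 2). Then for every i with 0 < i < k, the number a_i = −2i + Σ_{j=1}^{2i} (−1)^j C(2k, j) is divisible by 2, and a_1 = −2 − 2^s + 2^{s−1}(2^s − 1) is not divisible by 4. -/

import Mathlib

/-- `aCoef k i = -2i + Σ_{j=1}^{2i} (-1)^j C(2k, j)`. -/
def aCoef (k i : ℕ) : ℤ :=
  -2 * (i : ℤ) + ∑ j ∈ Finset.Icc 1 (2 * i), (-1 : ℤ) ^ j * ((2 * k).choose j : ℤ)

theorem aCoef_two_pow (k s : ℕ) (hk : 2 < k) (hs : 2 * k = 2 ^ s) :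
    (∀ i : ℕ, 0 < i → i < k → (2 : ℤ) ∣ aCoef k i) ∧
    aCoef k 1 = -2 - 2 ^ s + 2 ^ (s - 1) * (2 ^ s - 1) ∧
    ¬ (4 : ℤ) ∣ aCoef k 1 := by
  have hs3 : 3 ≤ s := by
    by_contra h
    interval_cases s <;> omega
  have hchoose2 : (2 ^ s).choose 2 = 2 ^ (s - 1) * (2 ^ s - 1) := by
    rw [Nat.choose_two_right]
    have h1 : 2 ^ s = 2 * 2 ^ (s - 1) := by
      rw [← pow_succ']
      congr 1
      omega
    rw [h1, Nat.mul_assoc, Nat.mul_div_cancel_left _ (by norm_num)]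
  have heq : aCoef k 1 = -2 - 2 ^ s + 2 ^ (s - 1) * (2 ^ s - 1) := by
    unfold aCoef
    rw [hs]
    have : Finset.Icc 1 (2 * 1) = {1, 2} := by decide
    rw [this]
    rw [Finset.sum_insert (by decide), Finset.sum_singleton]
    rw [Nat.choose_one_right, hchoose2]
    push_cast [Nat.one_le_two_pow]
    ring
  refine ⟨?_, heq, ?_⟩
  · intro i hi hik
    unfold aCoef
    refine dvd_add ⟨-i, by ring⟩ (Finset.dvd_sum ?_)
    intro j hj
    simp only [Finset.mem_Icc] at hj
    refine Dvd.dvd.mul_left ?_ _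
    rw [hs]
    exact_mod_cast Int.natCast_dvd_natCast.mpr
      (Nat.prime_two.dvd_choose_pow (by omega) (by omega))
  · rw [heq]
    obtain ⟨a, rfl⟩ : ∃ a, s = a + 3 := ⟨s - 3, by omega⟩
    intro hdvd
    have h2 : (4 : ℤ) ∣ (-2 - 2 ^ (a + 3) + 2 ^ (a + 3 - 1) * (2 ^ (a + 3) - 1) + 2) := by
      refine ⟨-2 * 2 ^ a + 2 ^ a * (8 * 2 ^ a - 1), ?_⟩
      have : a + 3 - 1 = a + 2 := by omega
      rw [this]
      ring
    have : (4 : ℤ) ∣ 2 := by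
      have := dvd_sub h2 hdvd
      simpa using this
    norm_num at this
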